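/- With the gauged dimensions d_{(XY)} = 2d_X d_Y (X ≠ Y unordered), d_{(X,ε)} = d_X², d_{(X̂,ε)} = δ d_X, and the gauged twists θ_{(XY)} = θ_X θ_Y, θ_{(X,ε)} = θ_X², θ_{(X̂,ε)} = ε η^{1/2} θ_X^{1/2}, the Gauss sum of the gauged theory equals Σ_ℓ d_ℓ² θ_ℓ = 2 (p⁺)², where p⁺ = Σ_{X∈I} θ_X d_X². Consequently, the normalized Gauss sum of the gauged theory satisfies η_eq := 2(p⁺)²/(2μ) = η² where η = p⁺/δ. -/

import Mathlib

/-- The Gauss sum of the ℤ/2 permutation gauging equals `2(p⁺)²`, and hence its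
normalized Gauss sum is `2(p⁺)²/(2μ) = η²` where `η = p⁺/δ`. The gauged labels
are unordered pairs `(XY)`, `X ≠ Y` (written as half the sum over ordered
off-diagonal pairs), and `(X,ε)`, `(X̂,ε)` with `ε ∈ {±}`. -/
theorem gauged_gauss_sum {I : Type} [Fintype I] [DecidableEq I]
    (d : I → ℝ) (δ : ℝ) (θ : I → ℂ) (sqrtη : ℂ) (sqrtθ : I → ℂ)
    (hd : ∀ X, 0 < d X) (hδ : 0 < δ) (hδ2 : δ ^ 2 = ∑ X, d X ^ 2)
    (hθne : ∀ X, θ X ≠ 0)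
    (hsqη : sqrtη ^ 2 = (∑ X, θ X * (d X : ℂ) ^ 2) / (δ : ℂ))
    (hsqθ : ∀ X, sqrtθ X ^ 2 = θ X) :
    ((∑ p ∈ Finset.univ.offDiag, (2 * (d p.1 : ℂ) * (d p.2 : ℂ)) ^ 2 * (θ p.1 * θ p.2)) / 2
      + (∑ X, ∑ _ε : Bool, ((d X : ℂ) ^ 2) ^ 2 * (θ X) ^ 2)
      + (∑ X, ∑ ε : Bool, ((δ : ℂ) * (d X : ℂ)) ^ 2 *
          ((if ε then 1 else -1) * sqrtη * sqrtθ X))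
      = 2 * (∑ X, θ X * (d X : ℂ) ^ 2) ^ 2)
    ∧ 2 * (∑ X, θ X * (d X : ℂ) ^ 2) ^ 2 / (2 * (δ : ℂ) ^ 2)
      = ((∑ X, θ X * (d X : ℂ) ^ 2) / (δ : ℂ)) ^ 2 := by
  have hδ0 : (δ : ℂ) ≠ 0 := by exact_mod_cast hδ.ne'
  constructor
  · -- third sum vanishes
    have h3 : (∑ X, ∑ ε : Bool, ((δ : ℂ) * (d X : ℂ)) ^ 2 *
          ((if ε then 1 else -1) * sqrtη * sqrtθ X)) = 0 := by
      apply Finset.sum_eq_zero; intro X _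
      simp [Fintype.sum_bool]
    rw [h3, add_zero]
    -- expand square
    have hsq : (∑ X, θ X * (d X : ℂ) ^ 2) ^ 2
        = ∑ p ∈ (Finset.univ : Finset I) ×ˢ Finset.univ,
            (θ p.1 * (d p.1 : ℂ) ^ 2) * (θ p.2 * (d p.2 : ℂ) ^ 2) := by
      rw [sq, Finset.sum_mul_sum, Finset.sum_product]
    rw [hsq, ← Finset.diag_union_offDiag (Finset.univ : Finset I),
      Finset.sum_union (Finset.disjoint_diag_offDiag _), Finset.sum_diag]
    have h2 : (∑ X, ∑ _ε : Bool, ((d X : ℂ) ^ 2) ^ 2 * (θ X) ^ 2)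
        = 2 * ∑ X : I, (θ X * (d X : ℂ) ^ 2) * (θ X * (d X : ℂ) ^ 2) := by
      rw [Finset.mul_sum]; apply Finset.sum_congr rfl; intro X _
      simp [Fintype.sum_bool]; ring
    have h1 : (∑ p ∈ Finset.univ.offDiag, (2 * (d p.1 : ℂ) * (d p.2 : ℂ)) ^ 2 * (θ p.1 * θ p.2)) / 2
        = 2 * ∑ p ∈ (Finset.univ : Finset I).offDiag,
            (θ p.1 * (d p.1 : ℂ) ^ 2) * (θ p.2 * (d p.2 : ℂ) ^ 2) := by
      rw [Finset.mul_sum, Finset.sum_div]; apply Finset.sum_congr rfl; intro p _; ring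
    rw [h1, h2]; ring
  · rw [div_pow]; field_simp
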